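/- Let Γ be a group with finite generating set S acting by isometries on a metric space X, let x₀ ∈ X with L = max_{σ∈S} ρ(x₀, σx₀), let η ∈ (0, L) and D ≥ 0 such that ρ(x₀, γx₀) ≤ (L − η)·l_S(γ) + D for all γ ∈ Γ. Then for every real c > Ent_S(Γ) + L − η, the Poincaré series P_c(x, y) = Σ_{γ∈Γ} e^{−c·l_S(γ)} · cosh(ρ(x, γy)) converges for all x, y ∈ X. -/

import Mathlib

open Pointwise

/-- The word length of `γ` with respect to a generating set `S`: the least `n` such that
`γ` is a product of `n` elements of `S ∪ S⁻¹` (so the identity has word length `0`). -/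
noncomputable def wordLength {Γ : Type*} [Group Γ] (S : Set Γ) (γ : Γ) : ℕ :=
  sInf {n : ℕ | γ ∈ (S ∪ S⁻¹) ^ n}

/-- The entropy (exponential growth rate) of `Γ` with respect to the generating set `S`:
`Ent_S Γ = lim_{m → ∞} (1/m) log |{γ : l_S(γ) ≤ m}|`. -/
noncomputable def entropy {Γ : Type*} [Group Γ] (S : Set Γ) : ℝ :=
  Filter.atTop.limsup fun m : ℕ =>
    Real.log (Nat.card {γ : Γ // wordLength S γ ≤ m}) / m

section Aux
variable {Γ : Type*} [Group Γ]

lemma aux_list_prod_mem_pow {T : Set Γ} :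
    ∀ (l : List Γ), (∀ y ∈ l, y ∈ T) → l.prod ∈ T ^ l.length
  | [], _ => by simp [Set.mem_one]
  | a :: l, h => by
    rw [List.prod_cons, List.length_cons, pow_succ']
    exact Set.mul_mem_mul (h a (by simp))
      (aux_list_prod_mem_pow l fun y hy => h y (by simp [hy]))

lemma aux_mem_pow_wordLength {S : Set Γ} (hgen : Subgroup.closure S = ⊤) (γ : Γ) :
    γ ∈ (S ∪ S⁻¹) ^ wordLength S γ := by
  have h1 : γ ∈ Subgroup.closure S := hgen ▸ Subgroup.mem_top γ
  have h2 : γ ∈ Submonoid.closure (S ∪ S⁻¹) := by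
    rw [← Subgroup.closure_toSubmonoid]; exact h1
  obtain ⟨l, hl, hprod⟩ := Submonoid.exists_list_of_mem_closure h2
  exact Nat.sInf_mem (⟨l.length, show γ ∈ _ from hprod ▸ aux_list_prod_mem_pow l hl⟩ : {n : ℕ | γ ∈ (S ∪ S⁻¹) ^ n}.Nonempty)

lemma aux_wordLength_one {S : Set Γ} : wordLength S 1 = 0 :=
  Nat.le_zero.mp (Nat.sInf_le (by simp [Set.mem_one]))

lemma aux_pow_finite {T : Set Γ} (h : T.Finite) : ∀ n, (T ^ n : Set Γ).Finite
  | 0 => by rw [pow_zero]; exact Set.finite_one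
  | n + 1 => by rw [pow_succ]; exact (aux_pow_finite h n).mul h

lemma aux_natCard_pow_le {T : Set Γ} : ∀ n, Nat.card (T ^ n : Set Γ) ≤ (Nat.card T) ^ n
  | 0 => by simp
  | n + 1 => by
    rw [pow_succ, pow_succ]
    exact le_trans Set.natCard_mul_le (Nat.mul_le_mul (aux_natCard_pow_le n) le_rfl)

end Aux

theorem stmt_16 {Γ X : Type*} [Group Γ] [MetricSpace X] [MulAction Γ X]
    (hiso : ∀ γ : Γ, Isometry fun x : X => γ • x)
    (S : Finset Γ) (hSne : S.Nonempty)
    (hgen : Subgroup.closure (S : Set Γ) = ⊤)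
    (x₀ : X) (L η D : ℝ)
    (hL : L = S.sup' hSne fun σ => dist x₀ (σ • x₀))
    (hη₀ : 0 < η) (hηL : η < L) (hD : 0 ≤ D)
    (hb : ∀ γ : Γ, dist x₀ (γ • x₀) ≤ (L - η) * (wordLength (S : Set Γ) γ : ℝ) + D)
    (c : ℝ) (hc : c > entropy (S : Set Γ) + L - η) (x y : X) :
    Summable fun γ : Γ =>
      Real.exp (-c * (wordLength (S : Set Γ) γ : ℝ)) * Real.cosh (dist x (γ • y)) := by
  classical
  set l : Γ → ℕ := wordLength (S : Set Γ) with hldef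
  set T : Set Γ := (S : Set Γ) ∪ (S : Set Γ)⁻¹ with hTdef
  set U : Set Γ := T ∪ {1} with hUdef
  have hTfin : T.Finite := S.finite_toSet.union (Set.finite_inv.mpr S.finite_toSet)
  have hUfin : U.Finite := hTfin.union (Set.finite_singleton 1)
  have h1U : (1 : Γ) ∈ U := Or.inr rfl
  have hmem : ∀ γ : Γ, γ ∈ T ^ l γ := aux_mem_pow_wordLength hgen
  have hsub : ∀ m : ℕ, {γ : Γ | l γ ≤ m} ⊆ U ^ m := fun m γ hγ =>
    Set.pow_subset_pow Set.subset_union_left h1U hγ (hmem γ)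
  have hUmfin : ∀ m : ℕ, (U ^ m : Set Γ).Finite := aux_pow_finite hUfin
  have hfinle : ∀ m : ℕ, Finite {γ : Γ // l γ ≤ m} := fun m =>
    ((hUmfin m).subset (hsub m)).to_subtype
  have hfineq : ∀ m : ℕ, Finite {γ : Γ // l γ = m} := fun m =>
    ((hUmfin m).subset (fun γ hγ => hsub m (le_of_eq hγ))).to_subtype
  set N : ℕ → ℕ := fun m => Nat.card {γ : Γ // l γ ≤ m} with hNdef
  have hNpos : ∀ m, 0 < N m := by
    intro m
    have := hfinle m
    have : Nonempty {γ : Γ // l γ ≤ m} := ⟨⟨1, by simp [hldef, aux_wordLength_one]⟩⟩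
    exact Nat.card_pos
  have hNle : ∀ m, N m ≤ Nat.card U ^ m := fun m =>
    le_trans (Nat.card_mono (hUmfin m) (hsub m)) (aux_natCard_pow_le m)
  have hB1 : 1 ≤ Nat.card U := by
    have := hUfin.to_subtype
    have : Nonempty U := ⟨⟨1, h1U⟩⟩
    exact Nat.card_pos
  -- the sequence whose limsup is the entropy
  set a : ℕ → ℝ := fun m => Real.log (N m) / m with hadef
  have hent : entropy (S : Set Γ) = Filter.atTop.limsup a := rfl
  have hbdd : Filter.IsBoundedUnder (· ≤ ·) Filter.atTop a := by
    apply Filter.isBoundedUnder_of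
    refine ⟨Real.log (Nat.card U), fun m => ?_⟩
    rcases Nat.eq_zero_or_pos m with hm | hm
    · simp only [hadef, hm, Nat.cast_zero, div_zero]
      exact Real.log_nonneg (Nat.one_le_cast.mpr hB1)
    · have h1 : Real.log (N m) ≤ Real.log ((Nat.card U : ℝ) ^ m) := by
        apply Real.log_le_log (by exact_mod_cast hNpos m)
        exact_mod_cast hNle m
      rw [Real.log_pow] at h1
      rw [hadef, div_le_iff₀ (by exact_mod_cast hm)]
      calc Real.log (N m) ≤ m * Real.log (Nat.card U) := h1
        _ = Real.log (Nat.card U) * m := by ring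
  set t : ℝ := c - (L - η) with htdef
  have hct : entropy (S : Set Γ) < t := by rw [htdef]; linarith
  set t' : ℝ := (entropy (S : Set Γ) + t) / 2 with ht'def
  have ht'1 : entropy (S : Set Γ) < t' := by rw [ht'def]; linarith
  have ht't : t' < t := by rw [ht'def]; linarith
  have hev : ∀ᶠ m in Filter.atTop, a m < t' :=
    Filter.eventually_lt_of_limsup_lt (hent ▸ ht'1) hbdd
  obtain ⟨M, hM⟩ := Filter.eventually_atTop.mp hev
  set M' : ℕ := M + 1 with hM'def
  have hNexp : ∀ m, M' ≤ m → (N m : ℝ) < Real.exp (t' * m) := by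
    intro m hm
    have hm1 : 0 < m := lt_of_lt_of_le (Nat.succ_pos M) hm
    have h1 : a m < t' := hM m (le_trans (Nat.le_succ M) hm)
    rw [hadef] at h1
    have h2 : Real.log (N m) < t' * m := by
      rwa [div_lt_iff₀ (by exact_mod_cast hm1)] at h1
    exact (Real.log_lt_iff_lt_exp (by exact_mod_cast hNpos m)).mp h2
  set r : ℝ := Real.exp (t' - t) with hrdef
  have hr0 : 0 ≤ r := (Real.exp_pos _).le
  have hr1 : r < 1 := by
    rw [hrdef, Real.exp_lt_one_iff]; linarith
  -- summability of γ ↦ exp (-t * l γ)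
  set g : Γ → ℝ := fun γ => Real.exp (-t * (l γ : ℝ)) with hgdef
  have hg : Summable g := by
    rw [← (Equiv.sigmaFiberEquiv l).summable_iff]
    refine (summable_sigma_of_nonneg fun p => (Real.exp_pos _).le).mpr ⟨?_, ?_⟩
    · intro m
      have := hfineq m
      exact Summable.of_finite
    · have houter : ∀ m : ℕ,
          (∑' p : {γ : Γ // l γ = m}, (g ∘ (Equiv.sigmaFiberEquiv l)) ⟨m, p⟩)
            = (Nat.card {γ : Γ // l γ = m} : ℝ) * Real.exp (-t * m) := by
        intro m
        have := hfineq m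
        have := Fintype.ofFinite {γ : Γ // l γ = m}
        have hc : ∀ p : {γ : Γ // l γ = m},
            (g ∘ (Equiv.sigmaFiberEquiv l)) ⟨m, p⟩ = Real.exp (-t * m) := by
          intro p
          simp [hgdef, Equiv.sigmaFiberEquiv, p.prop]
        rw [tsum_congr hc, tsum_fintype, Finset.sum_const, nsmul_eq_mul]
        congr 1
        exact_mod_cast (Nat.card_eq_fintype_card.trans Finset.card_univ.symm).symm
      have hsum2 : Summable fun m : ℕ =>
          (Nat.card {γ : Γ // l γ = m} : ℝ) * Real.exp (-t * m) := by
        rw [← summable_nat_add_iff M']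
        refine Summable.of_nonneg_of_le (f := fun n => r ^ (n + M'))
          (fun n => mul_nonneg (Nat.cast_nonneg _) (Real.exp_pos _).le) ?_ ?_
        · intro n
          set m : ℕ := n + M' with hmdef
          have hmM : M' ≤ m := by omega
          have hcard_le : Nat.card {γ : Γ // l γ = m} ≤ N m := by
            have := hfinle m
            refine Nat.card_le_card_of_injective
              (fun p => ⟨p.val, le_of_eq p.prop⟩) ?_
            intro p q hpq
            exact Subtype.ext (Subtype.mk_eq_mk.mp hpq)
          calc (Nat.card {γ : Γ // l γ = m} : ℝ) * Real.exp (-t * m)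
              ≤ Real.exp (t' * m) * Real.exp (-t * m) := by
                apply mul_le_mul_of_nonneg_right _ (Real.exp_pos _).le
                exact le_trans (by exact_mod_cast hcard_le) (hNexp m hmM).le
            _ = Real.exp ((t' - t) * m) := by rw [← Real.exp_add]; ring_nf
            _ = r ^ m := by rw [hrdef, ← Real.exp_nat_mul]; ring_nf
        · exact (summable_nat_add_iff M').mpr (summable_geometric_of_lt_one hr0 hr1)
      exact hsum2.congr fun m => (houter m).symm
  -- comparison
  set C : ℝ := Real.exp (dist x x₀ + dist x₀ y + D) with hCdef
  refine Summable.of_nonneg_of_le (f := fun γ => C * g γ)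
    (fun γ => mul_nonneg (Real.exp_pos _).le (Real.cosh_pos _).le) ?_ (hg.mul_left C)
  intro γ
  have hdistb : dist x (γ • y) ≤ dist x x₀ + ((L - η) * (l γ : ℝ) + D) + dist x₀ y := by
    calc dist x (γ • y) ≤ dist x x₀ + dist x₀ (γ • x₀) + dist (γ • x₀) (γ • y) :=
          dist_triangle4 _ _ _ _
      _ = dist x x₀ + dist x₀ (γ • x₀) + dist x₀ y := by
          rw [show dist (γ • x₀) (γ • y) = dist x₀ y from (hiso γ).dist_eq x₀ y]
      _ ≤ _ := by have := hb γ; linarith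
  have hcosh : Real.cosh (dist x (γ • y)) ≤ Real.exp (dist x (γ • y)) := by
    rw [Real.cosh_eq]
    have h1 : Real.exp (-(dist x (γ • y))) ≤ Real.exp (dist x (γ • y)) :=
      Real.exp_le_exp.mpr (by linarith [dist_nonneg (x := x) (y := γ • y)])
    linarith
  calc Real.exp (-c * (l γ : ℝ)) * Real.cosh (dist x (γ • y))
      ≤ Real.exp (-c * (l γ : ℝ)) *
          Real.exp (dist x x₀ + ((L - η) * (l γ : ℝ) + D) + dist x₀ y) := by
        apply mul_le_mul_of_nonneg_left _ (Real.exp_pos _).le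
        exact le_trans hcosh (Real.exp_le_exp.mpr hdistb)
    _ = C * g γ := by
        rw [hCdef, hgdef, ← Real.exp_add, ← Real.exp_add]
        congr 1
        rw [htdef]; ring
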